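/- Let R_− : X → ℝ be continuous with R_− ≤ 0, and for each c > 0 let g_c : X → ℝ be continuous with ∫_M e^{g_c(ax)} dm(a) = 1 for all x ∈ X, and assume sup_{x∈X} |g_c(x) − c R_−(x)| / c → 0 as c → ∞. Then for every ε > 0 there exists a constant ψ_ε > 0 such that for every x ∈ X, m({a ∈ M : R_−(ax) > −ε}) > ψ_ε. -/

import Mathlib

open MeasureTheory Filter Topology Set ENNReal

noncomputable section

namespace GXY

variable {M : Type*}

/-- The shift map on the sequence space `ℕ → M`. -/
def shift (x : ℕ → M) : ℕ → M := fun n => x (n + 1)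

/-- Prepending a symbol `a` to a sequence `x`. -/
def cons (a : M) (x : ℕ → M) : ℕ → M := fun n => Nat.casesOn n a x

/-- The metric `d(x,y) = ∑ θ^n d_M(x_n, y_n)` on `ℕ → M`. -/
def D [MetricSpace M] (θ : ℝ) (x y : ℕ → M) : ℝ := ∑' n, θ ^ n * dist (x n) (y n)

/-- Hölder continuity with respect to the metric `D θ`. -/
def IsHolder [MetricSpace M] (θ : ℝ) (f : (ℕ → M) → ℝ) : Prop :=
  ∃ C > (0 : ℝ), ∃ α ∈ Set.Ioc (0 : ℝ) 1, ∀ x y, |f x - f y| ≤ C * (D θ x y) ^ α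

/-- Shift-invariant Borel probability measures on `ℕ → M`. -/
def IsInvProb [MetricSpace M] [MeasurableSpace M] (μ : Measure (ℕ → M)) : Prop :=
  IsProbabilityMeasure μ ∧ μ.map shift = μ

/-- The maximal ergodic average `β(f)`. -/
def betaF [MetricSpace M] [MeasurableSpace M] (f : (ℕ → M) → ℝ) : ℝ :=
  sSup { r | ∃ μ : Measure (ℕ → M), IsInvProb μ ∧ r = ∫ x, f x ∂μ }

/-- A maximizing measure for `f`. -/
def IsMaximizing [MetricSpace M] [MeasurableSpace M] (f : (ℕ → M) → ℝ)
    (μ : Measure (ℕ → M)) : Prop :=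
  IsInvProb μ ∧ ∫ x, f x ∂μ = betaF f

/-- A calibrated subaction `V` for `f`:
`V y = max_{σ x = y} (f x + V x - β f)` for every `y`. -/
def IsCalibrated [MetricSpace M] [MeasurableSpace M] (f V : (ℕ → M) → ℝ) : Prop :=
  Continuous V ∧
    ∀ y, IsGreatest { t | ∃ x, shift x = y ∧ t = f x + V x - betaF f } (V y)

/-- The Ruelle transfer operator `(L_g w)(x) = ∫_M e^{g(ax)} w(ax) dm(a)`. -/
def Ruelle [MetricSpace M] [MeasurableSpace M] (m : Measure M) (g w : (ℕ → M) → ℝ) :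
    (ℕ → M) → ℝ :=
  fun x => ∫ a, Real.exp (g (cons a x)) * w (cons a x) ∂m

/-- `R₊ = β(f) + V ∘ σ - V - f ≥ 0`. -/
def Rplus [MetricSpace M] [MeasurableSpace M] (f V : (ℕ → M) → ℝ) (x : ℕ → M) : ℝ :=
  betaF f + V (shift x) - V x - f x

/-- `R₊^∞(z) = ∑_{j≥0} R₊(σ^j z) ∈ [0,∞]`. -/
def RplusInf [MetricSpace M] [MeasurableSpace M] (f V : (ℕ → M) → ℝ) (z : ℕ → M) : ℝ≥0∞ :=
  ∑' j : ℕ, ENNReal.ofReal (Rplus f V (shift^[j] z))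

/-- `R₋ = f + V - V ∘ σ - β(f) ≤ 0`. -/
def Rminus [MetricSpace M] [MeasurableSpace M] (f V : (ℕ → M) → ℝ) (x : ℕ → M) : ℝ :=
  f x + V x - V (shift x) - betaF f

/-- The Birkhoff sum `R₋^k = ∑_{j<k} R₋ ∘ σ^j`. -/
def RminusBirk [MetricSpace M] [MeasurableSpace M] (f V : (ℕ → M) → ℝ) (k : ℕ)
    (z : ℕ → M) : ℝ :=
  ∑ j ∈ Finset.range k, Rminus f V (shift^[j] z)

/-- Extended-real logarithm with the convention `log 0 = -∞`. -/
def elog (t : ℝ) : EReal := if t = 0 then ⊥ else ((Real.log t : ℝ) : EReal)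

theorem mass_near_zero_of_Rminus
    [MetricSpace M] [CompactSpace M] [ConnectedSpace M] [MeasurableSpace M] [BorelSpace M]
    (hdiam : ∀ a b : M, dist a b ≤ 1)
    (θ : ℝ) (hθ : θ ∈ Set.Ioo (0 : ℝ) 1)
    (m : Measure M) [IsProbabilityMeasure m]
    (R : (ℕ → M) → ℝ) (hRcont : Continuous R) (hRle : ∀ x, R x ≤ 0)
    (g : ℝ → (ℕ → M) → ℝ)
    (hgcont : ∀ c > (0 : ℝ), Continuous (g c))
    (hnorm : ∀ c > (0 : ℝ), ∀ x, ∫ a, Real.exp (g c (cons a x)) ∂m = 1)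
    (hconv : ∀ ε > (0 : ℝ), ∃ N : ℝ, ∀ c > N, ∀ x, |g c x - c * R x| / c < ε) :
    ∀ ε > (0 : ℝ), ∃ ψ > (0 : ℝ), ∀ x : ℕ → M,
      ENNReal.ofReal ψ < m { a : M | -ε < R (cons a x) } := by
  intro ε hε
  obtain ⟨N, hN⟩ := hconv (ε / 2) (by positivity)
  set c : ℝ := max N 0 + 1 + 2 * Real.log 2 / ε with hc
  have hlog2 : (0:ℝ) < Real.log 2 := Real.log_pos (by norm_num)
  have hq : (0:ℝ) < 2 * Real.log 2 / ε := by positivity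
  have hcpos : 0 < c := by
    have h0 : (0:ℝ) ≤ max N 0 := le_max_right _ _
    simp only [hc]; linarith
  have hcN : N < c := by
    have h0 : N ≤ max N 0 := le_max_left _ _
    simp only [hc]; linarith
  have hcq : 2 * Real.log 2 / ε ≤ c := by
    have h0 : (0:ℝ) ≤ max N 0 := le_max_right _ _
    simp only [hc]; linarith
  have hexp_half : Real.exp (-(c * (ε / 2))) ≤ 1 / 2 := by
    have h1 : Real.log 2 ≤ c * (ε / 2) := by
      have : 2 * Real.log 2 / ε * (ε / 2) = Real.log 2 := by field_simp
      nlinarith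
    have h2 : Real.exp (-(c * (ε / 2))) ≤ Real.exp (-(Real.log 2)) :=
      Real.exp_le_exp.mpr (by linarith)
    have h3 : Real.exp (-(Real.log 2)) = 1 / 2 := by
      rw [Real.exp_neg, Real.exp_log] <;> norm_num
    linarith
  refine ⟨(1 / 4) * Real.exp (-(c * (ε / 2))), by positivity, ?_⟩
  intro x
  have hconsCont : Continuous (fun a : M => cons a x) := by
    apply continuous_pi
    intro n
    cases n with
    | zero => exact continuous_id
    | succ n => exact continuous_const
  set A : Set M := { a : M | -ε < R (cons a x) } with hAdef
  have hAopen : IsOpen A := isOpen_lt continuous_const (hRcont.comp hconsCont)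
  have hAmeas : MeasurableSet A := hAopen.measurableSet
  have hgb : ∀ y, g c y ≤ c * R y + c * (ε / 2) := by
    intro y
    have h := hN c hcN y
    rw [div_lt_iff₀ hcpos] at h
    have h2 := (abs_lt.mp h).2
    nlinarith
  have hpt : ∀ a : M, Real.exp (g c (cons a x)) ≤
      Real.exp (-(c * (ε / 2))) + A.indicator (fun _ => Real.exp (c * (ε / 2))) a := by
    intro a
    by_cases ha : a ∈ A
    · rw [Set.indicator_of_mem ha]
      have h1 : g c (cons a x) ≤ c * (ε / 2) := by
        have h2 := hgb (cons a x); have h3 := hRle (cons a x); nlinarith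
      have h4 := Real.exp_le_exp.mpr h1
      have h5 := Real.exp_pos (-(c * (ε / 2)))
      linarith
    · rw [Set.indicator_of_notMem ha, add_zero]
      have hR : R (cons a x) ≤ -ε := by
        simp only [hAdef, Set.mem_setOf_eq, not_lt] at ha
        linarith
      have h1 : g c (cons a x) ≤ -(c * (ε / 2)) := by
        have h2 := hgb (cons a x); nlinarith
      exact Real.exp_le_exp.mpr h1
  have hfcont : Continuous (fun a : M => Real.exp (g c (cons a x))) :=
    Real.continuous_exp.comp ((hgcont c hcpos).comp hconsCont)
  have hint1 : Integrable (fun a : M => Real.exp (g c (cons a x))) m :=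
    hfcont.integrable_of_hasCompactSupport (HasCompactSupport.of_compactSpace _)
  have hint2 : Integrable (fun a : M =>
      Real.exp (-(c * (ε / 2))) + A.indicator (fun _ => Real.exp (c * (ε / 2))) a) m :=
    (integrable_const _).add ((integrable_const _).indicator hAmeas)
  have hmono := integral_mono hint1 hint2 hpt
  rw [hnorm c hcpos x] at hmono
  rw [integral_add (integrable_const _) ((integrable_const _).indicator hAmeas),
    integral_const, integral_indicator_const _ hAmeas] at hmono
  simp only [probReal_univ, measureReal_def, measure_univ, ENNReal.toReal_one, one_smul, smul_eq_mul, one_mul] at hmono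
  have htR : (0:ℝ) ≤ (m A).toReal := ENNReal.toReal_nonneg
  have hprod : Real.exp (-(c * (ε / 2))) * Real.exp (c * (ε / 2)) = 1 := by
    rw [← Real.exp_add]; simp
  have hkey : (1 / 2) * Real.exp (-(c * (ε / 2))) ≤ (m A).toReal := by
    nlinarith [Real.exp_pos (-(c * (ε / 2))), Real.exp_pos (c * (ε / 2))]
  have hlt : (1 / 4) * Real.exp (-(c * (ε / 2))) < (m A).toReal := by
    nlinarith [Real.exp_pos (-(c * (ε / 2)))]
  have hfin : m A ≠ ⊤ := measure_ne_top m A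
  calc ENNReal.ofReal ((1 / 4) * Real.exp (-(c * (ε / 2))))
      < ENNReal.ofReal ((m A).toReal) := by
        rw [ENNReal.ofReal_lt_ofReal_iff (lt_of_le_of_lt (by positivity) hlt)]
        exact hlt
    _ = m A := ENNReal.ofReal_toReal hfin


end GXY
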